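/- Let 1 < p < ∞ and 0 ≤ λ ≤ n, and let b be a locally integrable function on ℝⁿ. If there exists c > 0 such that ‖C_b(f)‖_{M_{p,λ}} ≤ c ‖f‖_{M_{p,λ}} for all f ∈ M_{p,λ}(ℝⁿ), then b ∈ BMO(ℝⁿ); more precisely, (1/|Q|) ∫_Q |b(y) − b_Q| dy ≲ c uniformly over all cubes Q. -/

import Mathlib

open MeasureTheory ENNReal Set

noncomputable section

/-- `ℝⁿ` with the Euclidean metric. -/
abbrev Rn (n : ℕ) : Type := EuclideanSpace ℝ (Fin n)

/-- The axis-parallel cube with center `c` and side length `h`. -/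
def zCube {n : ℕ} (c : Rn n) (h : ℝ) : Set (Rn n) := {x | ∀ i, |x i - c i| ≤ h / 2}

/-- `log⁺ t = max (log t) 0`. -/
def logPlus (t : ℝ) : ℝ := max (Real.log t) 0

/-- The Hardy–Littlewood maximal operator of an `ℝ≥0∞`-valued function:
`sup_{Q ∋ x} |Q|⁻¹ ∫_Q g`, the supremum over all axis-parallel cubes containing `x`. -/
def maxE {n : ℕ} (g : Rn n → ℝ≥0∞) (x : Rn n) : ℝ≥0∞ :=
  ⨆ (c : Rn n) (h : ℝ) (_ : 0 < h) (_ : x ∈ zCube c h),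
    (ENNReal.ofReal (h ^ n))⁻¹ * ∫⁻ y in zCube c h, g y

/-- The Hardy–Littlewood maximal operator of a real function. -/
def HLM {n : ℕ} (f : Rn n → ℝ) (x : Rn n) : ℝ≥0∞ :=
  maxE (fun y => ENNReal.ofReal |f y|) x

/-- The fractional maximal operator `M_α` applied to an `ℝ≥0∞`-valued function:
`sup_{Q ∋ x} |Q|^{(α-n)/n} ∫_Q g`. -/
def fracMaxE {n : ℕ} (α : ℝ) (g : Rn n → ℝ≥0∞) (x : Rn n) : ℝ≥0∞ :=
  ⨆ (c : Rn n) (h : ℝ) (_ : 0 < h) (_ : x ∈ zCube c h),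
    ENNReal.ofReal (h ^ (α - (n : ℝ))) * ∫⁻ y in zCube c h, g y

/-- The maximal commutator `C_b(f)(x) = sup_{Q ∋ x} |Q|⁻¹ ∫_Q |b x - b y| |f y| dy`. -/
def maxComm {n : ℕ} (b f : Rn n → ℝ) (x : Rn n) : ℝ≥0∞ :=
  ⨆ (c : Rn n) (h : ℝ) (_ : 0 < h) (_ : x ∈ zCube c h),
    (ENNReal.ofReal (h ^ n))⁻¹ * ∫⁻ y in zCube c h, ENNReal.ofReal (|b x - b y| * |f y|)

/-- The mean value `f_Q = |Q|⁻¹ ∫_Q f` of `f` over the cube with center `c`, side `h`. -/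
def cubeMean {n : ℕ} (f : Rn n → ℝ) (c : Rn n) (h : ℝ) : ℝ :=
  (h ^ n)⁻¹ * ∫ y in zCube c h, f y

/-- The mean oscillation `|Q|⁻¹ ∫_Q |b - b_Q|` of `b` over a cube. -/
def oscAvg {n : ℕ} (b : Rn n → ℝ) (c : Rn n) (h : ℝ) : ℝ≥0∞ :=
  (ENNReal.ofReal (h ^ n))⁻¹ * ∫⁻ y in zCube c h, ENNReal.ofReal |b y - cubeMean b c h|

/-- The BMO seminorm `‖b‖_* = sup_Q |Q|⁻¹ ∫_Q |b - b_Q|`. -/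
def bmoNorm {n : ℕ} (b : Rn n → ℝ) : ℝ≥0∞ :=
  ⨆ (c : Rn n) (h : ℝ) (_ : 0 < h), oscAvg b c h

/-- Morrey norm `‖g‖_{M_{p,λ}} = sup_{x, r>0} r^{(λ-n)/p} (∫_{B(x,r)} g^p)^{1/p}`
for an `ℝ≥0∞`-valued function. -/
def morreyE {n : ℕ} (p lam : ℝ) (g : Rn n → ℝ≥0∞) : ℝ≥0∞ :=
  ⨆ (x : Rn n) (r : ℝ) (_ : 0 < r),
    ENNReal.ofReal (r ^ ((lam - n) / p)) * (∫⁻ y in Metric.ball x r, g y ^ p) ^ (1 / p)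

/-- Morrey norm of a real function. -/
def morrey {n : ℕ} (p lam : ℝ) (f : Rn n → ℝ) : ℝ≥0∞ :=
  morreyE p lam (fun y => ENNReal.ofReal |f y|)

/-- The Zygmund function `Φ(t) = t (1 + log⁺ t)`, extended to `ℝ≥0∞`. -/
def zygFnE (t : ℝ≥0∞) : ℝ≥0∞ := t * (1 + ENNReal.ofReal (logPlus t.toReal))

/-- The Luxemburg-type `L(1+log⁺L)`-average of `g` over a cube:
`inf {α > 0 : |Q|⁻¹ ∫_Q Φ(g/α) ≤ 1}` (as an element of `ℝ≥0∞`, `= ∞` if no such `α`). -/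
def zygAvgE {n : ℕ} (g : Rn n → ℝ≥0∞) (c : Rn n) (h : ℝ) : ℝ≥0∞ :=
  sInf {a : ℝ≥0∞ | ∃ α : ℝ, 0 < α ∧ a = ENNReal.ofReal α ∧
    (ENNReal.ofReal (h ^ n))⁻¹ * ∫⁻ y in zCube c h, zygFnE (g y / ENNReal.ofReal α) ≤ 1}

/-- The `L(1+log⁺L)`-average of a real function over a cube. -/
def zygAvg {n : ℕ} (f : Rn n → ℝ) (c : Rn n) (h : ℝ) : ℝ≥0∞ :=
  zygAvgE (fun y => ENNReal.ofReal |f y|) c h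

/-- The weak `L(1+log⁺L)`-average of `g` over a cube:
`inf {α > 0 : ∀ t > 0, |Q|⁻¹ |{x ∈ Q : g x > α t}| ≤ (1/t)(1 + log⁺(1/t))}`. -/
def weakZygAvgE {n : ℕ} (g : Rn n → ℝ≥0∞) (c : Rn n) (h : ℝ) : ℝ≥0∞ :=
  sInf {a : ℝ≥0∞ | ∃ α : ℝ, 0 < α ∧ a = ENNReal.ofReal α ∧ ∀ t : ℝ, 0 < t →
    (ENNReal.ofReal (h ^ n))⁻¹ * volume {x ∈ zCube c h | ENNReal.ofReal (α * t) < g x}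
      ≤ ENNReal.ofReal ((1 / t) * (1 + logPlus (1 / t)))}

/-- The Zygmund–Morrey norm `sup_Q |Q|^{λ/n} ‖g‖_{L(1+log⁺L),Q}` of an `ℝ≥0∞`-valued function. -/
def zygMorreyE {n : ℕ} (lam : ℝ) (g : Rn n → ℝ≥0∞) : ℝ≥0∞ :=
  ⨆ (c : Rn n) (h : ℝ) (_ : 0 < h), ENNReal.ofReal (h ^ lam) * zygAvgE g c h

/-- The Zygmund–Morrey norm of a real function. -/
def zygMorrey {n : ℕ} (lam : ℝ) (f : Rn n → ℝ) : ℝ≥0∞ :=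
  zygMorreyE lam (fun y => ENNReal.ofReal |f y|)

/-- The weak Zygmund–Morrey norm `sup_Q |Q|^{λ/n} ‖g‖_{WL(1+log⁺L),Q}`. -/
def weakZygMorreyE {n : ℕ} (lam : ℝ) (g : Rn n → ℝ≥0∞) : ℝ≥0∞ :=
  ⨆ (c : Rn n) (h : ℝ) (_ : 0 < h), ENNReal.ofReal (h ^ lam) * weakZygAvgE g c h

/-- The commutator `[M,b]f(x) = M(bf)(x) - b(x) Mf(x)`. -/
def commMb {n : ℕ} (b f : Rn n → ℝ) (x : Rn n) : ℝ :=
  (HLM (fun y => b y * f y) x).toReal - b x * (HLM f x).toReal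

/-- `f` is radially decreasing: `f x = φ ‖x‖` with `φ` nonnegative and
nonincreasing on `(0,∞)`, measurable. -/
def RadDec {n : ℕ} (f : Rn n → ℝ) : Prop :=
  ∃ φ : ℝ → ℝ, Measurable φ ∧ (∀ r : ℝ, 0 < r → 0 ≤ φ r) ∧
    AntitoneOn φ (Set.Ioi 0) ∧ ∀ x, f x = φ ‖x‖

/-- `∫_Q |f| (1 + log⁺(|f| / |f|_Q))`. -/
def zygInt {n : ℕ} (f : Rn n → ℝ) (c : Rn n) (h : ℝ) : ℝ≥0∞ :=
  ∫⁻ y in zCube c h,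
    ENNReal.ofReal (|f y| * (1 + logPlus (|f y| / cubeMean (fun z => |f z|) c h)))

/-- `∫_0^t φ(ρ) ρ^{n-1} dρ`. -/
def radInt1 (n : ℕ) (φ : ℝ → ℝ) (t : ℝ) : ℝ≥0∞ :=
  ∫⁻ ρ in Set.Ioc (0 : ℝ) t, ENNReal.ofReal (φ ρ * ρ ^ (n - 1))

/-- `∫_0^x (1/t) ∫_0^t φ(ρ) ρ^{n-1} dρ dt`. -/
def radInt2 (n : ℕ) (φ : ℝ → ℝ) (x : ℝ) : ℝ≥0∞ :=
  ∫⁻ t in Set.Ioc (0 : ℝ) x, (ENNReal.ofReal t)⁻¹ * radInt1 n φ t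

/-- `∫_0^x (1/y) ∫_0^y (1/t) ∫_0^t φ(ρ) ρ^{n-1} dρ dt dy`. -/
def radInt3 (n : ℕ) (φ : ℝ → ℝ) (x : ℝ) : ℝ≥0∞ :=
  ∫⁻ y in Set.Ioc (0 : ℝ) x, (ENNReal.ofReal y)⁻¹ * radInt2 n φ y

/-- `sup_{x>0} x^{λ-n} ∫_0^x (1/t) ∫_0^t φ(ρ) ρ^{n-1} dρ dt`. -/
def radSup2 (n : ℕ) (lam : ℝ) (φ : ℝ → ℝ) : ℝ≥0∞ :=
  ⨆ (x : ℝ) (_ : 0 < x), ENNReal.ofReal (x ^ (lam - (n : ℝ))) * radInt2 n φ x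

/-- `sup_{x>0} x^{λ-n} ∫_0^x (1/y) ∫_0^y (1/t) ∫_0^t φ(ρ) ρ^{n-1} dρ dt dy`. -/
def radSup3 (n : ℕ) (lam : ℝ) (φ : ℝ → ℝ) : ℝ≥0∞ :=
  ⨆ (x : ℝ) (_ : 0 < x), ENNReal.ofReal (x ^ (lam - (n : ℝ))) * radInt3 n φ x

/-! ### Auxiliary lemmas -/

lemma zCube_eq_preimage {n : ℕ} (c : Rn n) (h : ℝ) :
    zCube c h = (MeasurableEquiv.toLp 2 (Fin n → ℝ)).symm ⁻¹'
      (Set.pi Set.univ (fun i => Set.Icc (c i - h/2) (c i + h/2))) := by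
  ext x
  simp only [zCube, Set.mem_preimage, Set.mem_pi, Set.mem_univ, forall_true_left,
    Set.mem_Icc, Set.mem_setOf_eq, MeasurableEquiv.coe_toLp_symm, MeasurableEquiv.coe_mk]
  constructor
  · intro hx i; have := hx i; rw [abs_le] at this; constructor <;> linarith [this.1, this.2]
  · intro hx i; rw [abs_le]; have := hx i; constructor <;> linarith [this.1, this.2]

lemma measurableSet_zCube {n : ℕ} (c : Rn n) (h : ℝ) : MeasurableSet (zCube c h) := by
  rw [zCube_eq_preimage]
  exact (MeasurableEquiv.toLp 2 (Fin n → ℝ)).symm.measurable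
    (MeasurableSet.univ_pi fun i => measurableSet_Icc)

lemma volume_zCube {n : ℕ} (c : Rn n) (h : ℝ) (hh : 0 ≤ h) :
    volume (zCube c h) = ENNReal.ofReal (h ^ n) := by
  rw [zCube_eq_preimage,
    (EuclideanSpace.volume_preserving_symm_measurableEquiv_toLp (Fin n)).measure_preimage
      (MeasurableSet.univ_pi fun i => measurableSet_Icc).nullMeasurableSet,
    volume_pi_pi]
  simp [Real.volume_Icc, ENNReal.ofReal_pow hh]

lemma zCube_subset_closedBall {n : ℕ} (c : Rn n) (h : ℝ) (hh : 0 ≤ h) :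
    zCube c h ⊆ Metric.closedBall c ((n : ℝ) * h / 2) := by
  intro x hx
  rw [Metric.mem_closedBall, EuclideanSpace.dist_eq]
  have : Real.sqrt (∑ i, dist (x i) (c i) ^ 2) ≤ Real.sqrt (∑ _i : Fin n, (h/2)^2) := by
    apply Real.sqrt_le_sqrt
    apply Finset.sum_le_sum
    intro i _
    have := hx i
    rw [Real.dist_eq]
    nlinarith [abs_nonneg (x i - c i)]
  refine this.trans ?_
  rw [Finset.sum_const, Finset.card_univ, Fintype.card_fin, nsmul_eq_mul]
  rw [show (n:ℝ) * (h/2)^2 = ((Real.sqrt n * (h/2)))^2 by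
    rw [mul_pow, Real.sq_sqrt (by positivity)]]
  rw [Real.sqrt_sq (by positivity)]
  have : Real.sqrt n ≤ n := by
    calc Real.sqrt n ≤ Real.sqrt ((n:ℝ)^2) :=
          Real.sqrt_le_sqrt (by exact_mod_cast Nat.le_self_pow two_ne_zero n)
      _ = n := Real.sqrt_sq (Nat.cast_nonneg n)
  nlinarith [Real.sqrt_nonneg (n:ℝ)]

lemma zCube_subset_ball {n : ℕ} (hn : 0 < n) (c : Rn n) (h : ℝ) (hh : 0 < h) :
    zCube c h ⊆ Metric.ball c ((n : ℝ) * h) := by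
  refine (zCube_subset_closedBall c h hh.le).trans ?_
  apply Metric.closedBall_subset_ball
  have h1 : (1:ℝ) ≤ n := by exact_mod_cast hn
  nlinarith

lemma coord_abs_le_dist {n : ℕ} (x y : Rn n) (i : Fin n) : |x i - y i| ≤ dist x y := by
  rw [EuclideanSpace.dist_eq, ← Real.dist_eq, ← Real.sqrt_sq dist_nonneg]
  exact Real.sqrt_le_sqrt (Finset.single_le_sum (f := fun j => dist (x j) (y j) ^ 2)
    (fun j _ => sq_nonneg _) (Finset.mem_univ i))

lemma ball_subset_zCube {n : ℕ} (x : Rn n) (r : ℝ) :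
    Metric.ball x r ⊆ zCube x (2 * r) := by
  intro y hy i
  have h1 : |y i - x i| ≤ dist y x := coord_abs_le_dist y x i
  rw [Metric.mem_ball] at hy
  linarith [h1.trans hy.le]

lemma morrey_indicator_le {n : ℕ} (p lam : ℝ) (hp : 1 < p) (hlam0 : 0 ≤ lam)
    (hlamn : lam ≤ (n : ℝ)) (ctr : Rn n) (h : ℝ) (hh : 0 < h) :
    morrey p lam ((zCube ctr h).indicator (fun _ => (1:ℝ)))
      ≤ ENNReal.ofReal ((2:ℝ) ^ ((n : ℝ)/p) * h ^ (lam/p)) := by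
  have hp0 : (0:ℝ) < p := by linarith
  rw [morrey, morreyE]
  refine iSup_le fun x => iSup_le fun r => iSup_le fun hr => ?_
  have hind : ∀ y : Rn n, ENNReal.ofReal |(zCube ctr h).indicator (fun _ => (1:ℝ)) y| ^ p
      = (zCube ctr h).indicator (fun _ => (1:ℝ≥0∞)) y := by
    intro y
    by_cases hy : y ∈ zCube ctr h <;>
      simp [hy, ENNReal.rpow_eq_zero_iff, hp0, Set.indicator_of_mem, Set.indicator_of_notMem,
        ENNReal.zero_rpow_of_pos hp0]
  have hint : (∫⁻ y in Metric.ball x r,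
      ENNReal.ofReal |(zCube ctr h).indicator (fun _ => (1:ℝ)) y| ^ p)
      = volume (zCube ctr h ∩ Metric.ball x r) := by
    simp_rw [hind]
    rw [lintegral_indicator (measurableSet_zCube ctr h)]
    simp [Measure.restrict_restrict (measurableSet_zCube ctr h)]
  rw [hint]
  have hvol1 : volume (zCube ctr h ∩ Metric.ball x r) ≤ ENNReal.ofReal (h ^ n) := by
    rw [← volume_zCube ctr h hh.le]; exact measure_mono inter_subset_left
  have hvol2 : volume (zCube ctr h ∩ Metric.ball x r) ≤ ENNReal.ofReal ((2*r) ^ n) := by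
    rw [← volume_zCube x (2*r) (by linarith)]
    exact measure_mono (inter_subset_right.trans (ball_subset_zCube x r))
  rcases le_total r h with hrh | hhr
  · calc ENNReal.ofReal (r ^ ((lam - n) / p)) * volume (zCube ctr h ∩ Metric.ball x r) ^ (1/p)
        ≤ ENNReal.ofReal (r ^ ((lam - n) / p)) * ENNReal.ofReal ((2*r) ^ n) ^ (1/p) := by
          gcongr
      _ = ENNReal.ofReal (r ^ ((lam - n) / p) * ((2*r) ^ n) ^ (1/p)) := by
          rw [ENNReal.ofReal_rpow_of_pos (by positivity),
            ← ENNReal.ofReal_mul (by positivity)]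
      _ ≤ ENNReal.ofReal ((2:ℝ) ^ ((n : ℝ)/p) * h ^ (lam/p)) := by
          apply ENNReal.ofReal_le_ofReal
          rw [← Real.rpow_natCast (2*r) n, ← Real.rpow_mul (by linarith),
            Real.mul_rpow (by norm_num) hr.le]
          rw [show (n:ℝ) * (1/p) = (n:ℝ)/p by ring]
          rw [show r ^ ((lam - ↑n) / p) * ((2:ℝ) ^ ((n:ℝ)/p) * r ^ ((n:ℝ)/p))
              = (2:ℝ) ^ ((n:ℝ)/p) * (r ^ ((lam - ↑n) / p) * r ^ ((n:ℝ)/p)) by ring]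
          rw [← Real.rpow_add hr]
          rw [show (lam - ↑n) / p + (n:ℝ)/p = lam / p by ring]
          have : r ^ (lam / p) ≤ h ^ (lam / p) :=
            Real.rpow_le_rpow hr.le hrh (by positivity)
          nlinarith [Real.rpow_nonneg (show (0:ℝ) ≤ 2 by norm_num) ((n:ℝ)/p)]
  · calc ENNReal.ofReal (r ^ ((lam - n) / p)) * volume (zCube ctr h ∩ Metric.ball x r) ^ (1/p)
        ≤ ENNReal.ofReal (r ^ ((lam - n) / p)) * ENNReal.ofReal (h ^ n) ^ (1/p) := by
          gcongr
      _ = ENNReal.ofReal (r ^ ((lam - n) / p) * (h ^ n) ^ (1/p)) := by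
          rw [ENNReal.ofReal_rpow_of_pos (by positivity),
            ← ENNReal.ofReal_mul (by positivity)]
      _ ≤ ENNReal.ofReal ((2:ℝ) ^ ((n : ℝ)/p) * h ^ (lam/p)) := by
          apply ENNReal.ofReal_le_ofReal
          rw [← Real.rpow_natCast h n, ← Real.rpow_mul hh.le,
            show (n:ℝ) * (1/p) = (n:ℝ)/p by ring]
          have h1 : r ^ ((lam - ↑n) / p) ≤ h ^ ((lam - ↑n) / p) :=
            Real.rpow_le_rpow_of_nonpos hh hhr (by
              apply div_nonpos_of_nonpos_of_nonneg <;> linarith)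
          calc r ^ ((lam - ↑n) / p) * h ^ ((n:ℝ)/p)
              ≤ h ^ ((lam - ↑n) / p) * h ^ ((n:ℝ)/p) := by
                have := Real.rpow_nonneg hh.le ((n:ℝ)/p); nlinarith
            _ = h ^ (lam/p) := by
                rw [← Real.rpow_add hh]; ring_nf
            _ ≤ (2:ℝ) ^ ((n : ℝ)/p) * h ^ (lam/p) := by
                nlinarith [Real.one_le_rpow (show (1:ℝ) ≤ 2 by norm_num)
                  (show (0:ℝ) ≤ (n:ℝ)/p by positivity), Real.rpow_nonneg hh.le (lam/p)]

lemma real_const_eq (n : ℕ) (p q lam h c : ℝ) (hh : 0 < h) (hn : 0 < n)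
    (hq : 1/p + 1/q = 1) :
    (h^n)⁻¹ * (((((n:ℝ)*h)^((lam-(n:ℝ))/p))⁻¹ * (c * ((2:ℝ)^((n:ℝ)/p) * h^(lam/p))))
        * ((h^n) : ℝ)^(1/q))
      = ((n:ℝ)^(((n:ℝ)-lam)/p) * (2:ℝ)^((n:ℝ)/p)) * c := by
  have hnp : (0:ℝ) < n := by exact_mod_cast hn
  set A := (n:ℝ)
  have e1 : ((A*h)^((lam-A)/p))⁻¹ = A^((A-lam)/p) * h^((A-lam)/p) := by
    rw [show ((lam-A)/p) = -((A-lam)/p) by ring, Real.rpow_neg (by positivity), inv_inv,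
      Real.mul_rpow hnp.le hh.le]
  have e2 : ((h:ℝ)^n)⁻¹ = h^(-A) := by
    rw [← Real.rpow_natCast h n, ← Real.rpow_neg hh.le]
  have e3 : ((h:ℝ)^n)^(1/q) = h^(A*(1/q)) := by
    rw [← Real.rpow_natCast h n, ← Real.rpow_mul hh.le]
  have e4 : h^(-A) * h^((A-lam)/p) * h^(lam/p) * h^(A*(1/q)) = 1 := by
    rw [← Real.rpow_add hh, ← Real.rpow_add hh, ← Real.rpow_add hh,
      show -A + (A-lam)/p + lam/p + A*(1/q) = 0 from by linear_combination A * hq]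
    exact Real.rpow_zero h
  rw [e1, e2, e3]
  linear_combination (A^((A-lam)/p) * (2:ℝ)^(A/p) * c) * e4
/-- If `1 < p < ∞`, `0 ≤ λ ≤ n`, `b` is locally integrable and
`‖C_b f‖_{M_{p,λ}} ≤ c ‖f‖_{M_{p,λ}}` for all `f ∈ M_{p,λ}`, then `b ∈ BMO(ℝⁿ)`;
more precisely `|Q|⁻¹ ∫_Q |b - b_Q| ≲ c` uniformly over all cubes `Q`. -/
theorem stmt1 (n : ℕ) (hn : 0 < n) (p lam : ℝ) (hp : 1 < p)
    (hlam0 : 0 ≤ lam) (hlamn : lam ≤ (n : ℝ))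
    (b : Rn n → ℝ) (hb : MeasureTheory.LocallyIntegrable b volume)
    (c : ℝ) (hc : 0 < c)
    (H : ∀ f : Rn n → ℝ, MeasureTheory.LocallyIntegrable f volume →
      morrey p lam f ≠ ⊤ →
      morreyE p lam (maxComm b f) ≤ ENNReal.ofReal c * morrey p lam f) :
    ∃ C : ℝ, 0 < C ∧ ∀ (ctr : Rn n) (h : ℝ), 0 < h →
      oscAvg b ctr h ≤ ENNReal.ofReal (C * c) := by
  have hp0 : (0:ℝ) < p := lt_trans one_pos hp
  have hnp : (0:ℝ) < n := by exact_mod_cast hn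
  set q : ℝ := Real.conjExponent p with hqdef
  have hpq : p.HolderConjugate q := Real.HolderConjugate.conjExponent hp
  have hq : 1/p + 1/q = 1 := by
    have := hpq.inv_add_inv_eq_one; simpa [one_div] using this
  refine ⟨(n:ℝ) ^ (((n:ℝ) - lam)/p) * (2:ℝ) ^ ((n:ℝ)/p), by positivity, ?_⟩
  intro ctr h hh
  set Q : Set (Rn n) := zCube ctr h with hQdef
  set f : Rn n → ℝ := Q.indicator (fun _ => (1:ℝ)) with hfdef
  set g : Rn n → ℝ≥0∞ := maxComm b f with hgdef
  set u : Rn n → ℝ≥0∞ := fun y => ENNReal.ofReal |b y - cubeMean b ctr h| with hudef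
  have hQm : MeasurableSet Q := measurableSet_zCube ctr h
  have hQvol : volume Q = ENNReal.ofReal (h^n) := volume_zCube ctr h hh.le
  have hVpos : (0:ℝ) < h ^ n := pow_pos hh n
  -- f is integrable, hence locally integrable
  have hfint : MeasureTheory.Integrable f volume := by
    rw [hfdef, integrable_indicator_iff hQm]
    exact integrableOn_const (by rw [hQvol]; exact ENNReal.ofReal_ne_top)
  have hfli : MeasureTheory.LocallyIntegrable f volume := hfint.locallyIntegrable
  -- Morrey bound of f
  have hK : morrey p lam f ≤ ENNReal.ofReal ((2:ℝ) ^ ((n : ℝ)/p) * h ^ (lam/p)) :=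
    morrey_indicator_le p lam hp hlam0 hlamn ctr h hh
  have hfne : morrey p lam f ≠ ⊤ :=
    ne_top_of_le_ne_top ENNReal.ofReal_ne_top hK
  -- b is integrable on Q
  have hbi : MeasureTheory.IntegrableOn b Q volume :=
    (hb.integrableOn_isCompact (isCompact_closedBall ctr ((n:ℝ) * h / 2))).mono_set
      (zCube_subset_closedBall ctr h hh.le)
  have hQfin : volume Q < ⊤ := by rw [hQvol]; exact ENNReal.ofReal_lt_top
  -- pointwise bound u ≤ g on Q
  have hpt : ∀ x ∈ Q, u x ≤ g x := by
    intro x hx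
    have hcint : MeasureTheory.IntegrableOn (fun _ => b x) Q volume :=
      integrableOn_const hQfin.ne
    have hxint : MeasureTheory.Integrable (fun y => |b x - b y|) (volume.restrict Q) :=
      (hcint.sub hbi).abs
    have hvolr : (volume Q).toReal = h ^ n := by
      rw [hQvol, ENNReal.toReal_ofReal hVpos.le]
    have hconst : (∫ _ in Q, b x ∂volume) = h ^ n * b x := by
      rw [setIntegral_const, measureReal_def, hvolr, smul_eq_mul]
    have hsub : b x - cubeMean b ctr h = (h^n)⁻¹ * ∫ y in Q, (b x - b y) ∂volume := by
      rw [integral_sub hcint hbi, hconst]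
      rw [cubeMean]
      have : (∫ y in zCube ctr h, b y ∂volume) = ∫ y in Q, b y ∂volume := by rw [hQdef]
      rw [this]
      field_simp
    have habs : |b x - cubeMean b ctr h| ≤ (h^n)⁻¹ * ∫ y in Q, |b x - b y| ∂volume := by
      rw [hsub, abs_mul, abs_of_nonneg (inv_nonneg.2 hVpos.le)]
      have h1 : |∫ y in Q, (b x - b y) ∂volume| ≤ ∫ y in Q, |b x - b y| ∂volume := by
        simpa [Real.norm_eq_abs] using
          norm_integral_le_integral_norm (μ := volume.restrict Q) (fun y => b x - b y)
      exact mul_le_mul_of_nonneg_left h1 (inv_nonneg.2 hVpos.le)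
    have hle1 : u x ≤ (ENNReal.ofReal (h^n))⁻¹ * ∫⁻ y in Q, ENNReal.ofReal |b x - b y| := by
      calc u x ≤ ENNReal.ofReal ((h^n)⁻¹ * ∫ y in Q, |b x - b y| ∂volume) :=
            ENNReal.ofReal_le_ofReal habs
        _ = (ENNReal.ofReal (h^n))⁻¹ * ∫⁻ y in Q, ENNReal.ofReal |b x - b y| := by
            rw [ENNReal.ofReal_mul (inv_nonneg.2 hVpos.le),
              ENNReal.ofReal_inv_of_pos hVpos,
              MeasureTheory.ofReal_integral_eq_lintegral_ofReal hxint
                (Filter.Eventually.of_forall fun y => abs_nonneg _)]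
    have hle2 : (∫⁻ y in Q, ENNReal.ofReal |b x - b y|)
        = ∫⁻ y in Q, ENNReal.ofReal (|b x - b y| * |f y|) := by
      apply setLIntegral_congr_fun hQm
      exact fun y hy => by
        rw [hfdef, Set.indicator_of_mem hy]
        norm_num
    refine hle1.trans ?_
    rw [hle2]
    rw [hgdef, maxComm]
    refine le_iSup_of_le ctr ?_
    refine le_iSup_of_le h ?_
    refine le_iSup_of_le hh ?_
    exact le_iSup_of_le hx le_rfl
  -- Hölder
  have hum : AEMeasurable u (volume.restrict Q) := by
    have h1 : AEMeasurable (fun y => b y - cubeMean b ctr h) volume :=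
      hb.aestronglyMeasurable.aemeasurable.sub aemeasurable_const
    exact ((continuous_abs.measurable.comp_aemeasurable h1).ennreal_ofReal).restrict
  have holder : (∫⁻ y in Q, u y) ≤ (∫⁻ y in Q, u y ^ p) ^ (1/p)
      * (ENNReal.ofReal (h^n)) ^ (1/q) := by
    have := ENNReal.lintegral_mul_le_Lp_mul_Lq (volume.restrict Q) hpq hum
      (aemeasurable_const (b := (1:ℝ≥0∞)))
    simp only [Pi.mul_apply, Pi.one_apply, mul_one, ENNReal.one_rpow,
      MeasureTheory.lintegral_one, Measure.restrict_apply_univ] at this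
    rwa [hQvol] at this
  -- compare with g on the ball
  set R : ℝ := (n:ℝ) * h with hRdef
  have hR : 0 < R := by positivity
  have hmono : (∫⁻ y in Q, u y ^ p) ≤ ∫⁻ y in Metric.ball ctr R, g y ^ p := by
    calc (∫⁻ y in Q, u y ^ p) ≤ ∫⁻ y in Q, g y ^ p :=
          setLIntegral_mono' hQm fun x hx => ENNReal.rpow_le_rpow (hpt x hx) hp0.le
      _ ≤ ∫⁻ y in Metric.ball ctr R, g y ^ p :=
          lintegral_mono_set (zCube_subset_ball hn ctr h hh)
  -- Morrey norm bound via hypothesis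
  have hsup : ENNReal.ofReal (R ^ ((lam - (n:ℝ)) / p))
      * (∫⁻ y in Metric.ball ctr R, g y ^ p) ^ (1/p) ≤ morreyE p lam g := by
    rw [morreyE]
    refine le_iSup_of_le ctr ?_
    refine le_iSup_of_le R ?_
    exact le_iSup_of_le hR le_rfl
  have hH : morreyE p lam g ≤ ENNReal.ofReal c
      * ENNReal.ofReal ((2:ℝ) ^ ((n : ℝ)/p) * h ^ (lam/p)) := by
    refine (H f hfli hfne).trans ?_
    exact mul_le_mul_right hK _
  have haR0 : ENNReal.ofReal (R ^ ((lam - (n:ℝ)) / p)) ≠ 0 := by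
    simp only [ne_eq, ENNReal.ofReal_eq_zero, not_le]
    positivity
  have hX : (∫⁻ y in Metric.ball ctr R, g y ^ p) ^ (1/p)
      ≤ (ENNReal.ofReal (R ^ ((lam - (n:ℝ)) / p)))⁻¹
        * (ENNReal.ofReal c * ENNReal.ofReal ((2:ℝ) ^ ((n : ℝ)/p) * h ^ (lam/p))) := by
    have h1 : ENNReal.ofReal (R ^ ((lam - (n:ℝ)) / p))
        * (∫⁻ y in Metric.ball ctr R, g y ^ p) ^ (1/p)
        ≤ ENNReal.ofReal c * ENNReal.ofReal ((2:ℝ) ^ ((n : ℝ)/p) * h ^ (lam/p)) :=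
      hsup.trans hH
    calc (∫⁻ y in Metric.ball ctr R, g y ^ p) ^ (1/p)
        = (ENNReal.ofReal (R ^ ((lam - (n:ℝ)) / p)))⁻¹
          * (ENNReal.ofReal (R ^ ((lam - (n:ℝ)) / p))
            * (∫⁻ y in Metric.ball ctr R, g y ^ p) ^ (1/p)) := by
          rw [← mul_assoc, ENNReal.inv_mul_cancel haR0 ENNReal.ofReal_ne_top, one_mul]
      _ ≤ _ := mul_le_mul_right h1 _
  -- final computation
  have goal_eq : oscAvg b ctr h = (ENNReal.ofReal (h^n))⁻¹ * ∫⁻ y in Q, u y := rfl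
  rw [goal_eq]
  calc (ENNReal.ofReal (h^n))⁻¹ * ∫⁻ y in Q, u y
      ≤ (ENNReal.ofReal (h^n))⁻¹ * ((∫⁻ y in Q, u y ^ p) ^ (1/p)
          * (ENNReal.ofReal (h^n)) ^ (1/q)) := mul_le_mul_right holder _
    _ ≤ (ENNReal.ofReal (h^n))⁻¹ * (((∫⁻ y in Metric.ball ctr R, g y ^ p) ^ (1/p))
          * (ENNReal.ofReal (h^n)) ^ (1/q)) := by
        gcongr
    _ ≤ (ENNReal.ofReal (h^n))⁻¹ * ((((ENNReal.ofReal (R ^ ((lam - (n:ℝ)) / p)))⁻¹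
          * (ENNReal.ofReal c * ENNReal.ofReal ((2:ℝ) ^ ((n : ℝ)/p) * h ^ (lam/p)))))
          * (ENNReal.ofReal (h^n)) ^ (1/q)) := by
        gcongr
    _ = ENNReal.ofReal ((((n:ℝ) ^ (((n:ℝ) - lam)/p) * (2:ℝ) ^ ((n:ℝ)/p))) * c) := by
        rw [← ENNReal.ofReal_inv_of_pos hVpos,
          ← ENNReal.ofReal_inv_of_pos (show (0:ℝ) < R ^ ((lam - (n:ℝ))/p) by positivity),
          ENNReal.ofReal_rpow_of_pos hVpos,
          ← ENNReal.ofReal_mul (by positivity),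
          ← ENNReal.ofReal_mul (by positivity),
          ← ENNReal.ofReal_mul (by positivity),
          ← ENNReal.ofReal_mul (by positivity)]
        exact congrArg _ (real_const_eq n p q lam h c hh hn hq)

end
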